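/- Let l ≥ 1 and let f be a rank-l tensor that is totally symmetric and traceless. Then for each i ∈ {1,2,3}, the rank-l tensor D_i f is again totally symmetric and traceless. -/

import Mathlib

noncomputable section

/-- The totally antisymmetric Levi-Civita symbol on three indices with ε₀₁₂ = 1
(indices written 1,2,3 in the paper). -/
def epsC (i j k : Fin 3) : ℂ :=
  ((((i : ℤ) - (j : ℤ)) * ((j : ℤ) - (k : ℤ)) * ((k : ℤ) - (i : ℤ))) / 2 : ℤ)

/-- The index tuple obtained from `v : Fin l → Fin 3` by deleting the `r`-th entry, keeping
the remaining entries in order, and appending `k` as the new last entry. -/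
def removeAppend (l : ℕ) (v : Fin l → Fin 3) (r : Fin l) (k : Fin 3) : Fin l → Fin 3 :=
  fun t =>
    if h : (t : ℕ) + 1 < l then
      (if (t : ℕ) < (r : ℕ) then v t else v ⟨(t : ℕ) + 1, h⟩)
    else k

/-- The operator `D_i` on rank-`l` tensors:
`(D_i f)_{i₁…i_l} = −∑_{r=1}^{l} ∑_{k} ε_{k i i_r} f_{i₁…î_r…i_l k}`. -/
def Dop (l : ℕ) (i : Fin 3) (f : (Fin l → Fin 3) → ℂ) : (Fin l → Fin 3) → ℂ :=
  fun v => -∑ r : Fin l, ∑ k : Fin 3, epsC k i (v r) * f (removeAppend l v r k)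

/-- A rank-`l` tensor is totally symmetric if its components are invariant under every
permutation of the indices. -/
def IsTotallySymmetric (l : ℕ) (f : (Fin l → Fin 3) → ℂ) : Prop :=
  ∀ (σ : Equiv.Perm (Fin l)) (v : Fin l → Fin 3), f (v ∘ σ) = f v

/-- A rank-`l` tensor is traceless if contracting any two of its indices against the
Kronecker delta gives zero. -/
def IsTraceless (l : ℕ) (f : (Fin l → Fin 3) → ℂ) : Prop :=
  ∀ (r s : Fin l), r ≠ s → ∀ v : Fin l → Fin 3,
    ∑ k : Fin 3, f (fun t => if t = r then k else if t = s then k else v t) = 0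

-- count function
def ct {l : ℕ} (v : Fin l → Fin 3) (a : Fin 3) : ℕ := ∑ t, if v t = a then 1 else 0

lemma ct_card {l : ℕ} (v : Fin l → Fin 3) (a : Fin 3) :
    Fintype.card {t // v t = a} = ct v a := by
  rw [Fintype.card_subtype, ct, Finset.card_filter]

lemma exists_perm {l : ℕ} (v w : Fin l → Fin 3) (h : ∀ a, ct v a = ct w a) :
    ∃ σ : Equiv.Perm (Fin l), v = w ∘ σ := by
  have he : ∀ a, Nonempty ({t // v t = a} ≃ {t // w t = a}) := fun a =>
    Fintype.card_eq.mp (by rw [ct_card, ct_card, h a])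
  let e : ∀ a, {t // v t = a} ≃ {t // w t = a} := fun a => (he a).some
  refine ⟨((Equiv.sigmaFiberEquiv v).symm.trans (Equiv.sigmaCongrRight e)).trans
    (Equiv.sigmaFiberEquiv w), ?_⟩
  funext t
  exact ((e (v t) ⟨t, rfl⟩).2).symm

lemma sym_eq {l : ℕ} {f : (Fin l → Fin 3) → ℂ} (hsym : IsTotallySymmetric l f)
    {v w : Fin l → Fin 3} (h : ∀ a, ct v a = ct w a) : f v = f w := by
  obtain ⟨σ, rfl⟩ := exists_perm v w h
  exact hsym σ w

lemma ct_comp {l : ℕ} (v : Fin l → Fin 3) (σ : Equiv.Perm (Fin l)) (a : Fin 3) :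
    ct (v ∘ σ) a = ct v a := Equiv.sum_comp σ (fun t => if v t = a then 1 else 0)

lemma removeAppend_eq_snoc {m : ℕ} (v : Fin (m+1) → Fin 3) (r : Fin (m+1)) (k : Fin 3) :
    removeAppend (m+1) v r k = Fin.snoc (fun j : Fin m => v (r.succAbove j)) k := by
  funext t
  refine Fin.lastCases ?_ ?_ t
  · simp [removeAppend]
  · intro j
    rw [Fin.snoc_castSucc]
    simp only [removeAppend, Fin.coe_castSucc]
    rw [dif_pos (by omega : (j : ℕ) + 1 < m + 1), Fin.succAbove]
    by_cases hb : j.castSucc < r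
    · rw [if_pos hb, if_pos (by simpa [Fin.lt_def] using hb)]
    · rw [if_neg hb, if_neg (by simpa [Fin.lt_def] using hb)]
      rfl

lemma ct_snoc {m : ℕ} (g : Fin m → Fin 3) (k a : Fin 3) :
    ct (Fin.snoc g k : Fin (m+1) → Fin 3) a = ct g a + (if k = a then 1 else 0) := by
  unfold ct
  rw [Fin.sum_univ_castSucc]
  simp only [Fin.snoc_castSucc, Fin.snoc_last]

lemma ct_removeAppend {m : ℕ} (v : Fin (m+1) → Fin 3) (r : Fin (m+1)) (k a : Fin 3) :
    ct (removeAppend (m+1) v r k) a + (if v r = a then 1 else 0)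
      = ct v a + (if k = a then 1 else 0) := by
  rw [removeAppend_eq_snoc, ct_snoc]
  have h := Fin.sum_univ_succAbove (fun t => if v t = a then 1 else 0) r
  simp only [ct]
  omega

lemma ct_update {l : ℕ} (g : Fin l → Fin 3) (p : Fin l) (x a : Fin 3) :
    ct (Function.update g p x) a + (if g p = a then 1 else 0)
      = ct g a + (if x = a then 1 else 0) := by
  unfold ct
  rw [← Finset.add_sum_erase _ (fun t => if Function.update g p x t = a then 1 else 0)
      (Finset.mem_univ p),
      ← Finset.add_sum_erase _ (fun t => if g t = a then 1 else 0) (Finset.mem_univ p)]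
  simp only [Function.update_self]
  have h : ∑ t ∈ Finset.univ.erase p, (if Function.update g p x t = a then 1 else 0)
       = ∑ t ∈ Finset.univ.erase p, (if g t = a then 1 else 0) := by
    refine Finset.sum_congr rfl fun t ht => ?_
    rw [Function.update_of_ne (Finset.ne_of_mem_erase ht)]
  omega

lemma epsC_swap (a b c : Fin 3) : epsC a b c = -epsC c b a := by
  fin_cases a <;> fin_cases b <;> fin_cases c <;> norm_num [epsC]

lemma antisym_sum (i : Fin 3) (F : Fin 3 → Fin 3 → ℂ) (hF : ∀ k mm, F k mm = F mm k) :
    ∑ k : Fin 3, ∑ mm : Fin 3, epsC mm i k * F k mm = 0 := by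
  have h : (∑ k : Fin 3, ∑ mm : Fin 3, epsC mm i k * F k mm)
      = -(∑ k : Fin 3, ∑ mm : Fin 3, epsC mm i k * F k mm) := by
    conv_lhs => rw [Finset.sum_comm]
    rw [← Finset.sum_neg_distrib]
    refine Finset.sum_congr rfl fun mm _ => ?_
    rw [← Finset.sum_neg_distrib]
    refine Finset.sum_congr rfl fun k _ => ?_
    rw [epsC_swap k i mm, hF mm k]
    ring
  exact add_self_eq_zero.mp (by linear_combination h)

lemma RA_castSucc {m : ℕ} (v : Fin (m+1) → Fin 3) (r : Fin (m+1)) (k : Fin 3) (j : Fin m) :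
    removeAppend (m+1) v r k j.castSucc = v (r.succAbove j) := by
  rw [removeAppend_eq_snoc, Fin.snoc_castSucc]

lemma RA_traced_self {m : ℕ} (v : Fin (m+1) → Fin 3) (r s : Fin (m+1)) (j : Fin m)
    (hj : r.succAbove j = s) (k mm : Fin 3) :
    removeAppend (m+1) (fun t => if t = r then k else if t = s then k else v t) r mm
      = Function.update (removeAppend (m+1) v r mm) j.castSucc k := by
  funext t
  rw [removeAppend_eq_snoc, removeAppend_eq_snoc]
  refine Fin.lastCases ?_ ?_ t
  · rw [Function.update_of_ne (Fin.castSucc_lt_last j).ne', Fin.snoc_last, Fin.snoc_last]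
  · intro j'
    by_cases h1 : j' = j
    · subst h1
      simp [hj, Fin.succAbove_ne r j']
    · have hne : r.succAbove j' ≠ s := by
        rw [← hj]
        exact fun h => h1 (Fin.succAbove_right_injective h)
      rw [Function.update_of_ne (by simpa [Fin.castSucc_inj] using h1)]
      simp [Fin.succAbove_ne r j', hne]

lemma RA_traced_other {m : ℕ} (v : Fin (m+1) → Fin 3) (r s p : Fin (m+1)) (jr js : Fin m)
    (hjr : p.succAbove jr = r) (hjs : p.succAbove js = s) (k mm : Fin 3) :
    removeAppend (m+1) (fun t => if t = r then k else if t = s then k else v t) p mm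
      = fun t => if t = jr.castSucc then k else if t = js.castSucc then k
          else removeAppend (m+1) v p mm t := by
  funext t
  rw [removeAppend_eq_snoc, removeAppend_eq_snoc]
  refine Fin.lastCases ?_ ?_ t
  · rw [if_neg (Fin.castSucc_lt_last jr).ne', if_neg (Fin.castSucc_lt_last js).ne',
      Fin.snoc_last, Fin.snoc_last]
  · intro j
    by_cases h1 : j = jr
    · subst h1
      simp [hjr]
    · have hr' : p.succAbove j ≠ r := by
        rw [← hjr]; exact fun h => h1 (Fin.succAbove_right_injective h)
      by_cases h2 : j = js
      · subst h2
        simp [hjs, hr', Fin.castSucc_inj, h1]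
      · have hs' : p.succAbove j ≠ s := by
          rw [← hjs]; exact fun h => h2 (Fin.succAbove_right_injective h)
        simp [hr', hs', Fin.castSucc_inj, h1, h2]

/-- For `l ≥ 1` and a totally symmetric traceless rank-`l` tensor `f`, each `D_i f` is again
totally symmetric and traceless. -/
theorem stmt6 (l : ℕ) (hl : 1 ≤ l) (f : (Fin l → Fin 3) → ℂ)
    (hsym : IsTotallySymmetric l f) (htr : IsTraceless l f) (i : Fin 3) :
    IsTotallySymmetric l (Dop l i f) ∧ IsTraceless l (Dop l i f) := by
  obtain ⟨m, rfl⟩ : ∃ m, l = m + 1 := ⟨l - 1, by omega⟩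
  constructor
  · -- total symmetry
    intro σ v
    simp only [Dop, neg_inj]
    rw [← Equiv.sum_comp σ
      (fun r => ∑ k : Fin 3, epsC k i (v r) * f (removeAppend (m+1) v r k))]
    refine Finset.sum_congr rfl fun r _ => Finset.sum_congr rfl fun k _ => ?_
    have hv : (v ∘ σ) r = v (σ r) := rfl
    rw [hv]
    congr 1
    refine sym_eq hsym fun a => ?_
    have h1 := ct_removeAppend (v ∘ σ) r k a
    have h2 := ct_removeAppend v (σ r) k a
    rw [hv, ct_comp] at h1
    exact Nat.add_right_cancel (h1.trans h2.symm)
  · -- tracelessness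
    intro r s hrs v
    obtain ⟨js, hjs⟩ := Fin.exists_succAbove_eq (show s ≠ r from hrs.symm)
    obtain ⟨jr, hjr⟩ := Fin.exists_succAbove_eq hrs
    set w : Fin 3 → Fin (m+1) → Fin 3 :=
      fun k t => if t = r then k else if t = s then k else v t with hw
    have key : ∑ k : Fin 3, Dop (m+1) i f (w k)
        = -∑ p : Fin (m+1), ∑ k : Fin 3, ∑ mm : Fin 3,
            epsC mm i (w k p) * f (removeAppend (m+1) (w k) p mm) := by
      simp only [Dop]
      rw [Finset.sum_neg_distrib, neg_inj]
      exact Finset.sum_comm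
    rw [key, neg_eq_zero]
    refine Finset.sum_eq_zero fun p _ => ?_
    by_cases hpr : p = r
    · subst hpr
      have step : ∀ k mm : Fin 3, epsC mm i (w k p) * f (removeAppend (m+1) (w k) p mm)
          = epsC mm i k * f (Function.update (removeAppend (m+1) v p mm) js.castSucc k) := by
        intro k mm
        rw [show w k p = k from if_pos rfl, hw, RA_traced_self v p s js hjs k mm]
      calc ∑ k : Fin 3, ∑ mm : Fin 3, epsC mm i (w k p) * f (removeAppend (m+1) (w k) p mm)
          = ∑ k : Fin 3, ∑ mm : Fin 3,
              epsC mm i k * f (Function.update (removeAppend (m+1) v p mm) js.castSucc k) := by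
            exact Finset.sum_congr rfl fun k _ => Finset.sum_congr rfl fun mm _ => step k mm
        _ = 0 := by
            refine antisym_sum i _ fun k mm => ?_
            refine sym_eq hsym fun a => ?_
            have e1 := ct_update (removeAppend (m+1) v p mm) js.castSucc k a
            have e2 := ct_update (removeAppend (m+1) v p k) js.castSucc mm a
            rw [RA_castSucc, hjs] at e1 e2
            have e3 := ct_removeAppend v p mm a
            have e4 := ct_removeAppend v p k a
            -- combine: ctU1 + c(vs) + c(vp) = ctv + c(mm) + c(k) and symmetric
            have g1 : ct (Function.update (removeAppend (m+1) v p mm) js.castSucc k) a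
                + ((if v s = a then 1 else 0) + (if v p = a then 1 else 0))
                = ct v a + ((if mm = a then 1 else 0) + (if k = a then 1 else 0)) := by
              calc _ = (ct (Function.update (removeAppend (m+1) v p mm) js.castSucc k) a
                    + (if v s = a then 1 else 0)) + (if v p = a then 1 else 0) := by ring
                _ = (ct (removeAppend (m+1) v p mm) a + (if k = a then 1 else 0))
                    + (if v p = a then 1 else 0) := by rw [e1]
                _ = (ct (removeAppend (m+1) v p mm) a + (if v p = a then 1 else 0))
                    + (if k = a then 1 else 0) := by ring
                _ = (ct v a + (if mm = a then 1 else 0)) + (if k = a then 1 else 0) := by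
                      rw [e3]
                _ = _ := by ring
            have g2 : ct (Function.update (removeAppend (m+1) v p k) js.castSucc mm) a
                + ((if v s = a then 1 else 0) + (if v p = a then 1 else 0))
                = ct v a + ((if mm = a then 1 else 0) + (if k = a then 1 else 0)) := by
              calc _ = (ct (Function.update (removeAppend (m+1) v p k) js.castSucc mm) a
                    + (if v s = a then 1 else 0)) + (if v p = a then 1 else 0) := by ring
                _ = (ct (removeAppend (m+1) v p k) a + (if mm = a then 1 else 0))
                    + (if v p = a then 1 else 0) := by rw [e2]
                _ = (ct (removeAppend (m+1) v p k) a + (if v p = a then 1 else 0))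
                    + (if mm = a then 1 else 0) := by ring
                _ = (ct v a + (if k = a then 1 else 0)) + (if mm = a then 1 else 0) := by
                      rw [e4]
                _ = _ := by ring
            exact Nat.add_right_cancel (g1.trans g2.symm)
    · by_cases hps : p = s
      · subst hps
        have hwp : ∀ k, w k p = k := fun k => by
          simp only [hw]
          split_ifs <;> rfl
        have hwsym : ∀ k : Fin 3, w k = fun t => if t = p then k else if t = r then k else v t := by
          intro k
          funext t
          simp only [hw]
          by_cases h1 : t = p <;> by_cases h2 : t = r <;> simp [h1, h2]
        have step : ∀ k mm : Fin 3, epsC mm i (w k p) * f (removeAppend (m+1) (w k) p mm)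
            = epsC mm i k * f (Function.update (removeAppend (m+1) v p mm) jr.castSucc k) := by
          intro k mm
          rw [hwp, hwsym, RA_traced_self v p r jr hjr k mm]
        calc ∑ k : Fin 3, ∑ mm : Fin 3, epsC mm i (w k p) * f (removeAppend (m+1) (w k) p mm)
            = ∑ k : Fin 3, ∑ mm : Fin 3,
                epsC mm i k * f (Function.update (removeAppend (m+1) v p mm) jr.castSucc k) := by
              exact Finset.sum_congr rfl fun k _ => Finset.sum_congr rfl fun mm _ => step k mm
          _ = 0 := by
              refine antisym_sum i _ fun k mm => ?_
              refine sym_eq hsym fun a => ?_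
              have e1 := ct_update (removeAppend (m+1) v p mm) jr.castSucc k a
              have e2 := ct_update (removeAppend (m+1) v p k) jr.castSucc mm a
              rw [RA_castSucc, hjr] at e1 e2
              have e3 := ct_removeAppend v p mm a
              have e4 := ct_removeAppend v p k a
              have g1 : ct (Function.update (removeAppend (m+1) v p mm) jr.castSucc k) a
                  + ((if v r = a then 1 else 0) + (if v p = a then 1 else 0))
                  = ct v a + ((if mm = a then 1 else 0) + (if k = a then 1 else 0)) := by
                calc _ = (ct (Function.update (removeAppend (m+1) v p mm) jr.castSucc k) a
                      + (if v r = a then 1 else 0)) + (if v p = a then 1 else 0) := by ring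
                  _ = (ct (removeAppend (m+1) v p mm) a + (if k = a then 1 else 0))
                      + (if v p = a then 1 else 0) := by rw [e1]
                  _ = (ct (removeAppend (m+1) v p mm) a + (if v p = a then 1 else 0))
                      + (if k = a then 1 else 0) := by ring
                  _ = (ct v a + (if mm = a then 1 else 0)) + (if k = a then 1 else 0) := by
                        rw [e3]
                  _ = _ := by ring
              have g2 : ct (Function.update (removeAppend (m+1) v p k) jr.castSucc mm) a
                  + ((if v r = a then 1 else 0) + (if v p = a then 1 else 0))
                  = ct v a + ((if mm = a then 1 else 0) + (if k = a then 1 else 0)) := by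
                calc _ = (ct (Function.update (removeAppend (m+1) v p k) jr.castSucc mm) a
                      + (if v r = a then 1 else 0)) + (if v p = a then 1 else 0) := by ring
                  _ = (ct (removeAppend (m+1) v p k) a + (if mm = a then 1 else 0))
                      + (if v p = a then 1 else 0) := by rw [e2]
                  _ = (ct (removeAppend (m+1) v p k) a + (if v p = a then 1 else 0))
                      + (if mm = a then 1 else 0) := by ring
                  _ = (ct v a + (if k = a then 1 else 0)) + (if mm = a then 1 else 0) := by
                        rw [e4]
                  _ = _ := by ring
              exact Nat.add_right_cancel (g1.trans g2.symm)
      · -- p ∉ {r, s}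
        obtain ⟨ar, har⟩ := Fin.exists_succAbove_eq (show r ≠ p from fun h => hpr h.symm)
        obtain ⟨as, has⟩ := Fin.exists_succAbove_eq (show s ≠ p from fun h => hps h.symm)
        have hne : ar.castSucc ≠ as.castSucc := by
          intro h
          apply hrs
          rw [← har, ← has, Fin.castSucc_inj.mp h]
        have hwp : ∀ k, w k p = v p := fun k => by simp [hw, hpr, hps]
        have step : ∀ k mm : Fin 3, epsC mm i (w k p) * f (removeAppend (m+1) (w k) p mm)
            = epsC mm i (v p) * f (fun t => if t = ar.castSucc then k
                else if t = as.castSucc then k else removeAppend (m+1) v p mm t) := by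
          intro k mm
          rw [hwp, hw, RA_traced_other v r s p ar as har has k mm]
        calc ∑ k : Fin 3, ∑ mm : Fin 3, epsC mm i (w k p) * f (removeAppend (m+1) (w k) p mm)
            = ∑ mm : Fin 3, ∑ k : Fin 3,
                epsC mm i (v p) * f (fun t => if t = ar.castSucc then k
                  else if t = as.castSucc then k else removeAppend (m+1) v p mm t) := by
              rw [Finset.sum_comm]
              exact Finset.sum_congr rfl fun mm _ => Finset.sum_congr rfl fun k _ => step k mm
          _ = ∑ mm : Fin 3, epsC mm i (v p) * ∑ k : Fin 3,
                f (fun t => if t = ar.castSucc then k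
                  else if t = as.castSucc then k else removeAppend (m+1) v p mm t) := by
              exact Finset.sum_congr rfl fun mm _ => (Finset.mul_sum _ _ _).symm
          _ = 0 := by
              refine Finset.sum_eq_zero fun mm _ => ?_
              rw [htr ar.castSucc as.castSucc hne (removeAppend (m+1) v p mm), mul_zero]
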